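/- Let X ∈ ℝ^{n×p} have full row rank with n < p, let y ∈ ℝⁿ, and let λ_max > 0 denote the largest eigenvalue of XᵀX. Fix α > 0 and define, for each initial value β^{(0)} ∈ ℝᵖ, the gradient descent iterates β^{(k)} = β^{(k-1)} + α Xᵀ(y − X β^{(k-1)}). Then the sequence (β^{(k)})_k converges for every initial value β^{(0)} ∈ ℝᵖ if and only if α < 2/λ_max. -/

import Mathlib

open Matrix Filter

lemma aux_pow_not_tendsto {μ : ℝ} (hμ : μ ≤ -1) (c : ℝ)
    (h : Tendsto (fun k : ℕ => μ ^ k) atTop (nhds c)) : False := by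
  have h1 : Tendsto (fun k : ℕ => μ ^ (k + 1)) atTop (nhds c) :=
    h.comp (tendsto_add_atTop_nat 1)
  have h2 : Tendsto (fun k : ℕ => μ ^ (k + 1)) atTop (nhds (c * μ)) := by
    simpa [pow_succ] using h.mul_const μ
  have heq : c = c * μ := tendsto_nhds_unique h1 h2
  have hc : c = 0 := by
    have hfac : c * (1 - μ) = 0 := by linear_combination heq
    rcases mul_eq_zero.mp hfac with h' | h'
    · exact h'
    · linarith
  rw [hc] at h
  have habs : Tendsto (fun k : ℕ => |μ ^ k|) atTop (nhds 0) := by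
    simpa using h.abs
  obtain ⟨k, hk⟩ := (habs.eventually_lt_const (by norm_num : (0:ℝ) < 1)).exists
  have h1k : (1 : ℝ) ≤ |μ ^ k| := by
    rw [abs_pow]
    exact one_le_pow₀ (by rw [abs_of_nonpos (by linarith)]; linarith)
  linarith

lemma aux_rec_tendsto {μ c : ℝ} (hμ : |μ| < 1) (x : ℕ → ℝ)
    (hx : ∀ k, x (k + 1) = μ * x k + c) :
    Tendsto x atTop (nhds (c / (1 - μ))) := by
  obtain ⟨hμ1, hμ2⟩ := abs_lt.mp hμ
  set l := c / (1 - μ) with hl_def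
  have hne : 1 - μ ≠ 0 := by intro h; linarith
  have hl : μ * l + c = l := by
    rw [hl_def]
    field_simp
    ring
  have key : ∀ k, x k = l + μ ^ k * (x 0 - l) := by
    intro k
    induction k with
    | zero => simp
    | succ k ih =>
        rw [hx k, ih, pow_succ]
        linear_combination hl
  have ht : Tendsto (fun k : ℕ => l + μ ^ k * (x 0 - l)) atTop (nhds (l + 0 * (x 0 - l))) :=
    tendsto_const_nhds.add ((tendsto_pow_atTop_nhds_zero_of_abs_lt_one hμ).mul_const _)
  simpa using ht.congr (fun k => (key k).symm)

/-- Gradient descent for least squares with constant step size `α > 0`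
converges for every initial value iff `α < 2/λ_max(XᵀX)`. -/
theorem gradient_descent_converges_iff
    {n p : ℕ} (hnp : n < p)
    (X : Matrix (Fin n) (Fin p) ℝ) (hX : X.rank = n)
    (y : Fin n → ℝ)
    (hherm : (Xᵀ * X).IsHermitian)
    (lammax : ℝ) (hlam : IsGreatest (Set.range hherm.eigenvalues) lammax)
    (hlampos : 0 < lammax)
    (α : ℝ) (hα : 0 < α) :
    (∀ β0 : Fin p → ℝ, ∃ L : Fin p → ℝ,
        Tendsto (fun k : ℕ =>
            (fun b : Fin p → ℝ => b + α • (Xᵀ *ᵥ (y - X *ᵥ b)))^[k] β0)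
          atTop (nhds L)) ↔
      α < 2 / lammax := by
  set A : Matrix (Fin p) (Fin p) ℝ := Xᵀ * X with hA_def
  set T : (Fin p → ℝ) → (Fin p → ℝ) :=
    fun b : Fin p → ℝ => b + α • (Xᵀ *ᵥ (y - X *ᵥ b)) with hT_def
  have hAt : Aᵀ = A := by
    have := hherm.eq
    rwa [conjTranspose_eq_transpose_of_trivial] at this
  -- T b in a convenient form
  have hTb : ∀ b : Fin p → ℝ, T b = b + α • (Xᵀ *ᵥ y) - α • (A *ᵥ b) := by
    intro b
    rw [hT_def]
    simp only [mulVec_sub, smul_sub, hA_def, ← mulVec_mulVec]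
    abel
  -- difference of iterates
  have hTdiff : ∀ b b' : Fin p → ℝ, T b - T b' = (b - b') - α • (A *ᵥ (b - b')) := by
    intro b b'
    rw [hTb b, hTb b', mulVec_sub, smul_sub]
    abel
  constructor
  · -- convergence for all β0 → α < 2/lammax
    intro h
    by_contra hcon
    push_neg at hcon
    have h2 : 2 ≤ α * lammax := by
      rw [div_le_iff₀ hlampos] at hcon
      linarith
    set μ : ℝ := 1 - α * lammax with hμ_def
    have hμ : μ ≤ -1 := by rw [hμ_def]; linarith
    obtain ⟨i0, hi0⟩ := hlam.1
    set u : Fin p → ℝ := ⇑(hherm.eigenvectorBasis i0) with hu_def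
    have hAu : A *ᵥ u = lammax • u := by
      rw [hu_def, hherm.mulVec_eigenvectorBasis, hi0]
    have hune : u ≠ 0 := by
      intro h0
      have := hherm.eigenvectorBasis.orthonormal.ne_zero i0
      exact this (by ext j; exact congrFun h0 j)
    obtain ⟨j, hj⟩ : ∃ j, u j ≠ 0 := by
      by_contra hjall
      push_neg at hjall
      exact hune (funext hjall)
    have hdiff : ∀ k : ℕ, T^[k] u - T^[k] 0 = (μ ^ k) • u := by
      intro k
      induction k with
      | zero => simp
      | succ k ih =>
          rw [Function.iterate_succ_apply', Function.iterate_succ_apply',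
            hTdiff, ih, mulVec_smul, hAu]
          ext j'
          simp only [Pi.sub_apply, Pi.smul_apply, smul_eq_mul, smul_smul]
          rw [pow_succ]
          ring
    obtain ⟨L1, hL1⟩ := h u
    obtain ⟨L2, hL2⟩ := h 0
    have hconv : Tendsto (fun k : ℕ => (μ ^ k) • u) atTop (nhds (L1 - L2)) := by
      have := hL1.sub hL2
      exact this.congr (fun k => hdiff k)
    have hj' : Tendsto (fun k : ℕ => μ ^ k * u j) atTop (nhds ((L1 - L2) j)) := by
      have := tendsto_pi_nhds.mp hconv j
      simpa using this
    have hpow : Tendsto (fun k : ℕ => μ ^ k) atTop (nhds ((L1 - L2) j * (u j)⁻¹)) := by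
      have := hj'.mul_const (u j)⁻¹
      refine this.congr (fun k => ?_)
      field_simp
    exact aux_pow_not_tendsto hμ _ hpow
  · -- α < 2/lammax → convergence for all β0
    intro hα2 β0
    have hαlam : α * lammax < 2 := by
      rw [lt_div_iff₀ hlampos] at hα2
      linarith
    set B := hherm.eigenvectorBasis with hB_def
    set lam := hherm.eigenvalues with hlam_def
    set f : ℕ → (Fin p → ℝ) := fun k => T^[k] β0 with hf_def
    set g : Fin p → ℕ → ℝ := fun i k => (⇑(B i)) ⬝ᵥ f k with hg_def
    set c : Fin p → ℝ := fun i => α * ((⇑(B i)) ⬝ᵥ (Xᵀ *ᵥ y)) with hc_def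
    -- positive semidefiniteness
    have hpsd : A.PosSemidef := by
      have := Matrix.posSemidef_conjTranspose_mul_self X
      rwa [conjTranspose_eq_transpose_of_trivial] at this
    have hlamnn : ∀ i, 0 ≤ lam i := fun i => hpsd.eigenvalues_nonneg i
    have hlamle : ∀ i, lam i ≤ lammax := fun i => hlam.2 ⟨i, rfl⟩
    have hABi : ∀ i, A *ᵥ ⇑(B i) = lam i • ⇑(B i) := fun i =>
      hherm.mulVec_eigenvectorBasis i
    -- symmetry in dot products
    have hdotA : ∀ (i : Fin p) (b : Fin p → ℝ),
        (⇑(B i)) ⬝ᵥ (A *ᵥ b) = lam i * ((⇑(B i)) ⬝ᵥ b) := by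
      intro i b
      rw [dotProduct_mulVec, ← mulVec_transpose, hAt, hABi i, smul_dotProduct,
        smul_eq_mul]
    have hstep : ∀ k, f (k + 1) = T (f k) := by
      intro k
      rw [hf_def]
      exact Function.iterate_succ_apply' T k β0
    -- the recurrence
    have hrec : ∀ i k, g i (k + 1) = (1 - α * lam i) * g i k + c i := by
      intro i k
      show (⇑(B i)) ⬝ᵥ f (k + 1)
        = (1 - α * lam i) * ((⇑(B i)) ⬝ᵥ f k) + α * ((⇑(B i)) ⬝ᵥ (Xᵀ *ᵥ y))
      rw [hstep, hTb, dotProduct_sub, dotProduct_add, dotProduct_smul, dotProduct_smul,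
        hdotA i]
      simp only [smul_eq_mul]
      ring
    -- each coordinate converges
    have hgconv : ∀ i, ∃ li, Tendsto (g i) atTop (nhds li) := by
      intro i
      rcases eq_or_lt_of_le (hlamnn i) with h0 | hpos
      · -- lam i = 0 : c i = 0 and g i is constant
        have hXBi : X *ᵥ ⇑(B i) = 0 := by
          have h1 : (X *ᵥ ⇑(B i)) ⬝ᵥ (X *ᵥ ⇑(B i)) = 0 := by
            rw [dotProduct_mulVec, ← mulVec_transpose, mulVec_mulVec, ← hA_def,
              hABi i, ← h0]
            simp
          exact dotProduct_self_eq_zero.mp h1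
        have hci : c i = 0 := by
          show α * ((⇑(B i)) ⬝ᵥ (Xᵀ *ᵥ y)) = 0
          rw [dotProduct_mulVec, ← mulVec_transpose, transpose_transpose, hXBi]
          simp
        have hconst : ∀ k, g i k = g i 0 := by
          intro k
          induction k with
          | zero => rfl
          | succ k ih => rw [hrec i k, ih, ← h0, hci]; ring
        refine ⟨g i 0, ?_⟩
        exact tendsto_const_nhds.congr (fun k => (hconst k).symm)
      · -- lam i > 0 : |μ| < 1
        have habs : |1 - α * lam i| < 1 := by
          rw [abs_lt]
          constructor
          · have : α * lam i ≤ α * lammax := by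
              apply mul_le_mul_of_nonneg_left (hlamle i) (le_of_lt hα)
            linarith
          · have : 0 < α * lam i := mul_pos hα hpos
            linarith
        exact ⟨_, aux_rec_tendsto habs (g i) (hrec i)⟩
    choose l hl using hgconv
    -- reconstruct the vector from the coordinates
    have hcoord : ∀ (k : ℕ) (j : Fin p), f k j = ∑ i, g i k * (B i) j := by
      intro k j
      have hsum := B.sum_repr (WithLp.toLp 2 (f k))
      have happ := congrFun (congrArg (fun v : EuclideanSpace ℝ (Fin p) => (v : Fin p → ℝ)) hsum) j
      dsimp only at happ
      rw [← happ]
      have hmsum := map_sum (EuclideanSpace.proj j)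
        (fun i : Fin p => B.repr (WithLp.toLp 2 (f k)) i • B i) Finset.univ
      change (∑ i : Fin p, B.repr (WithLp.toLp 2 (f k)) i • B i) j
          = ∑ i : Fin p, (B.repr (WithLp.toLp 2 (f k)) i • B i) j at hmsum
      rw [hmsum]
      apply Finset.sum_congr rfl
      intro i _
      rw [PiLp.smul_apply, smul_eq_mul]
      congr 1
      rw [B.repr_apply_apply]
      show _ = (⇑(B i)) ⬝ᵥ f k
      rw [dotProduct]
      simp [PiLp.inner_apply, RCLike.inner_apply, conj_trivial, mul_comm]
    refine ⟨fun j => ∑ i, l i * (B i) j, ?_⟩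
    rw [tendsto_pi_nhds]
    intro j
    have hsumconv : Tendsto (fun k : ℕ => ∑ i, g i k * (B i) j) atTop
        (nhds (∑ i, l i * (B i) j)) :=
      tendsto_finset_sum _ (fun i _ => (hl i).mul_const _)
    exact hsumconv.congr (fun k => (hcoord k j).symm)
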